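/- Let R be a commutative ring and I an ideal of R containing a non-zero-divisor. Then the trace ideal of I equals I · I⁻¹, where I⁻¹ = {x ∈ Q(R) : xI ⊆ R} and Q(R) is the total ring of fractions. More precisely, tr_R(I) is the ideal of R consisting of all finite sums Σ xᵢ aᵢ with xᵢ ∈ I⁻¹ and aᵢ ∈ I. -/

import Mathlib

/-- The trace ideal of a module. -/
noncomputable def traceIdeal (R M : Type*) [CommRing R] [AddCommGroup M] [Module R M] :
    Ideal R :=
  ⨆ φ : M →ₗ[R] R, LinearMap.range φ

/-- for an ideal I containing a non-zero-divisor, tr_R(I) = I·I⁻¹,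
where I⁻¹ = {x ∈ Q(R) : xI ⊆ R} inside the total ring of fractions Q(R):
an element r ∈ R lies in tr_R(I) iff its image in Q(R) is a finite sum of
products x·a with x ∈ I⁻¹ and a ∈ I. -/
theorem stmt4 (R : Type*) [CommRing R] (I : Ideal R)
    (hI : ∃ f ∈ I, f ∈ nonZeroDivisors R) (r : R) :
    r ∈ traceIdeal R ↥I ↔
      algebraMap R (Localization (nonZeroDivisors R)) r ∈
        Submodule.span R {y : Localization (nonZeroDivisors R) |
          ∃ x : Localization (nonZeroDivisors R),
            (∀ a ∈ I, ∃ s : R,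
              x * algebraMap R (Localization (nonZeroDivisors R)) a =
                algebraMap R (Localization (nonZeroDivisors R)) s) ∧
            ∃ a ∈ I, y = x * algebraMap R (Localization (nonZeroDivisors R)) a} := by
  set Q := Localization (nonZeroDivisors R) with hQ
  obtain ⟨f, hfI, hf⟩ := hI
  have hinj : Function.Injective (algebraMap R Q) := IsFractionRing.injective R Q
  have hfu : IsUnit (algebraMap R Q f) := IsLocalization.map_units Q ⟨f, hf⟩
  constructor
  · intro hr
    refine Submodule.iSup_induction (motive := fun r => algebraMap R Q r ∈ Submodule.span R _)
      (fun φ : I →ₗ[R] R => LinearMap.range φ) hr ?_ ?_ ?_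
    · rintro φ _ ⟨b, rfl⟩
      set x := IsLocalization.mk' Q (φ ⟨f, hfI⟩) (⟨f, hf⟩ : nonZeroDivisors R) with hx
      have hxf : x * algebraMap R Q f = algebraMap R Q (φ ⟨f, hfI⟩) :=
        IsLocalization.mk'_spec Q _ _
      have key : ∀ a (ha : a ∈ I), x * algebraMap R Q a = algebraMap R Q (φ ⟨a, ha⟩) := by
        intro a ha
        have h1 : f * φ ⟨a, ha⟩ = a * φ ⟨f, hfI⟩ := by
          have : f • (⟨a, ha⟩ : I) = a • (⟨f, hfI⟩ : I) := by
            ext; simp [mul_comm]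
          calc f * φ ⟨a, ha⟩ = φ (f • ⟨a, ha⟩) := by rw [map_smul]; rfl
            _ = φ (a • ⟨f, hfI⟩) := by rw [this]
            _ = a * φ ⟨f, hfI⟩ := by rw [map_smul]; rfl
        apply hfu.mul_left_cancel
        calc algebraMap R Q f * (x * algebraMap R Q a)
            = (x * algebraMap R Q f) * algebraMap R Q a := by ring
          _ = algebraMap R Q (φ ⟨f, hfI⟩) * algebraMap R Q a := by rw [hxf]
          _ = algebraMap R Q (f * φ ⟨a, ha⟩) := by rw [← map_mul, mul_comm, ← h1]
          _ = algebraMap R Q f * algebraMap R Q (φ ⟨a, ha⟩) := by rw [map_mul]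
      apply Submodule.subset_span
      refine ⟨x, fun a ha => ⟨φ ⟨a, ha⟩, key a ha⟩, b.1, b.2, ?_⟩
      rw [key b.1 b.2]
    · simp
    · intro u v hu hv
      rw [map_add]
      exact Submodule.add_mem _ hu hv
  · intro h
    have hsub : {y : Q |
          ∃ x : Q, (∀ a ∈ I, ∃ s : R, x * algebraMap R Q a = algebraMap R Q s) ∧
            ∃ a ∈ I, y = x * algebraMap R Q a} ⊆
        (Submodule.map (Algebra.linearMap R Q) (traceIdeal R I) : Set Q) := by
      rintro y ⟨x, hx, a, ha, rfl⟩
      choose g hg using hx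
      have hadd : ∀ b c : I, g _ (b + c).2 = g _ b.2 + g _ c.2 := by
        intro b c
        apply hinj
        rw [map_add, ← hg, ← hg, ← hg]
        show x * algebraMap R Q (b.1 + c.1) = _
        rw [map_add, mul_add]
      have hsmul : ∀ (m : R) (b : I), g _ (m • b).2 = m * g _ b.2 := by
        intro m b
        apply hinj
        rw [map_mul, ← hg, ← hg]
        show x * algebraMap R Q (m * b.1) = _
        rw [map_mul]; ring
      let φ : I →ₗ[R] R :=
        { toFun := fun b => g b.1 b.2
          map_add' := fun b c => hadd b c
          map_smul' := fun m b => hsmul m b }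
      refine ⟨g a ha, ?_, (hg a ha).symm⟩
      have : g a ha ∈ LinearMap.range φ := ⟨⟨a, ha⟩, rfl⟩
      exact (le_iSup (fun ψ : I →ₗ[R] R => LinearMap.range ψ) φ) this
    have := Submodule.span_le.mpr hsub
    obtain ⟨t, ht, heq⟩ := this h
    exact hinj heq ▸ ht
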